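/- Let X be a real Banach space such that for every ε > 0 there exists δ > 0 such that for any x ∈ S(X) there exists g ∈ S(X*) with S(B(X), g, 2δ) ⊆ B(x, ε). Then for every ε > 0 there exists δ > 0 such that for any x ∈ S(X) there exists a norm-attaining f ∈ D(S(X)) with S(B(X), f, δ) ⊆ B(x, ε); consequently D⁻¹(D(S(X)) ∩ B(f, δ)) ⊆ B(x, ε). -/

import Mathlib

open NormedSpace
set_option maxHeartbeats 1000000

/-- Phelps maximal point: for `g` of norm ≤ 1 and `η > 0` there is `v` in the closed unit
ball which is maximal for the cone ordering `b ≽ v ↔ η‖b - v‖ ≤ g b - g v`. -/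
theorem phelps_maximal {X : Type*} [NormedAddCommGroup X] [NormedSpace ℝ X] [CompleteSpace X]
    (g : StrongDual ℝ X) (hg : ‖g‖ = 1) {η : ℝ} (hη : 0 < η) :
    ∃ v : X, ‖v‖ ≤ 1 ∧ ∀ b : X, ‖b‖ ≤ 1 → η * ‖b - v‖ ≤ g b - g v → b = v := by
  set P := {x : X // ‖x‖ ≤ 1} with hP
  let r : P → P → Prop := fun a b => η * ‖(b : X) - a‖ ≤ g b - g a
  have rtrans : ∀ {a b c : P}, r a b → r b c → r a c := by
    intro a b c hab hbc
    have h1 : η * ‖(c : X) - a‖ ≤ η * (‖(c : X) - b‖ + ‖(b : X) - a‖) := by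
      have := norm_sub_le_norm_sub_add_norm_sub (c : X) b a
      nlinarith
    nlinarith [hab, hbc]
  have gle : ∀ p : P, g p ≤ 1 := by
    intro p
    calc g p ≤ ‖g (p : X)‖ := le_abs_self _
    _ ≤ ‖g‖ * ‖(p : X)‖ := g.le_opNorm _
    _ ≤ 1 := by rw [hg]; simpa using p.2
  have hchain : ∀ c : Set P, IsChain r c → ∃ ub, ∀ a ∈ c, r a ub := by
    intro c hc
    rcases c.eq_empty_or_nonempty with rfl | hne
    · exact ⟨⟨0, by simp⟩, by simp⟩
    set s : ℝ := sSup ((fun p : P => g p) '' c) with hs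
    have hbdd : BddAbove ((fun p : P => g p) '' c) := by
      refine ⟨1, ?_⟩
      rintro y ⟨p, _, rfl⟩
      exact gle p
    have hnei : ((fun p : P => g p) '' c).Nonempty := hne.image _
    have hles : ∀ p ∈ c, g p ≤ s := fun p hp => le_csSup hbdd ⟨p, hp, rfl⟩
    -- choose a sequence approaching the sup
    have hex : ∀ n : ℕ, ∃ p : P, p ∈ c ∧ s - (1/2) ^ n < g p := by
      intro n
      have h1 : s - (1/2) ^ n < s := by
        have : (0:ℝ) < (1/2) ^ n := by positivity
        linarith
      obtain ⟨y, ⟨p, hp, rfl⟩, hy⟩ := exists_lt_of_lt_csSup hnei h1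
      exact ⟨p, hp, hy⟩
    choose a ha hga using hex
    -- the sequence is Cauchy
    have hdiff : ∀ n : ℕ, η * ‖((a (n+1)) : X) - a n‖ ≤ (1/2) ^ n := by
      intro n
      have h1 : g (a n) ≤ s := hles _ (ha n)
      have h2 : g (a (n+1)) ≤ s := hles _ (ha (n+1))
      have h3 : s - (1/2) ^ n < g (a n) := hga n
      have h4 : s - (1/2) ^ (n+1) < g (a (n+1)) := hga (n+1)
      have h5 : (1/2:ℝ) ^ (n+1) ≤ (1/2) ^ n := by
        apply pow_le_pow_of_le_one <;> norm_num
      rcases eq_or_ne (a n) (a (n+1)) with heq | hneq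
      · rw [← heq, sub_self, norm_zero, mul_zero]
        positivity
      · rcases hc (ha n) (ha (n+1)) hneq with hr | hr
        · have h6 : η * ‖((a (n+1)) : X) - a n‖ ≤ g (a (n+1)) - g (a n) := hr
          linarith
        · have h6 : η * ‖((a n) : X) - a (n+1)‖ ≤ g (a n) - g (a (n+1)) := hr
          rw [norm_sub_rev]
          linarith
    have hcauchy : CauchySeq (fun n => ((a n) : X)) := by
      apply cauchySeq_of_le_geometric_two (C := 2 * η⁻¹)
      intro n
      rw [dist_eq_norm, norm_sub_rev]
      have h3 : ‖((a (n+1)) : X) - a n‖ ≤ η⁻¹ * (1/2) ^ n := by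
        rw [← mul_le_mul_iff_right₀ hη, ← mul_assoc, mul_inv_cancel₀ hη.ne', one_mul]
        exact hdiff n
      calc ‖((a (n+1)) : X) - a n‖ ≤ η⁻¹ * (1/2) ^ n := h3
        _ = 2 * η⁻¹ / 2 / 2 ^ n := by rw [one_div, inv_pow]; ring
    obtain ⟨v, hv⟩ := cauchySeq_tendsto_of_complete hcauchy
    have hvnorm : ‖v‖ ≤ 1 := by
      have h1 : Filter.Tendsto (fun n => ‖((a n) : X)‖) Filter.atTop (nhds ‖v‖) := hv.norm
      exact le_of_tendsto h1 (Filter.Eventually.of_forall fun n => (a n).2)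
    have hgv : g v = s := by
      have h1 : Filter.Tendsto (fun n => g (a n)) Filter.atTop (nhds (g v)) :=
        (g.continuous.tendsto v).comp hv
      have h2 : Filter.Tendsto (fun n => g (a n)) Filter.atTop (nhds s) := by
        apply tendsto_of_tendsto_of_tendsto_of_le_of_le
          (g := fun n : ℕ => s - (1/2)^n) (h := fun _ : ℕ => s)
        · have : Filter.Tendsto (fun n : ℕ => ((1:ℝ)/2) ^ n) Filter.atTop (nhds 0) := by
            apply tendsto_pow_atTop_nhds_zero_of_lt_one <;> norm_num
          simpa using (tendsto_const_nhds (x := s)).sub this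
        · exact tendsto_const_nhds
        · exact fun n => (hga n).le
        · exact fun n => hles _ (ha n)
      exact tendsto_nhds_unique h1 h2
    refine ⟨⟨v, hvnorm⟩, ?_⟩
    intro p hp
    show η * ‖v - (p : X)‖ ≤ g v - g p
    have key : ∀ n : ℕ, η * ‖((a n) : X) - p‖ ≤ (s - g p) + (1/2) ^ n := by
      intro n
      have hps : g p ≤ s := hles _ hp
      rcases eq_or_ne p (a n) with rfl | hneq
      · simp only [sub_self, norm_zero, mul_zero]
        have : (0:ℝ) < (1/2)^n := by positivity
        linarith
      · rcases hc hp (ha n) hneq with hr | hr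
        · have : η * ‖((a n) : X) - p‖ ≤ g (a n) - g p := hr
          have h1 : g (a n) ≤ s := hles _ (ha n)
          have : (0:ℝ) < (1/2)^n := by positivity
          linarith [hr, hles _ (ha n)]
        · have h1 : η * ‖((p : X)) - a n‖ ≤ g p - g (a n) := hr
          have h2 : s - (1/2)^n < g (a n) := hga n
          rw [norm_sub_rev]
          linarith
    have h1 : Filter.Tendsto (fun n => η * ‖((a n) : X) - p‖) Filter.atTop
        (nhds (η * ‖v - (p : X)‖)) := by
      exact (tendsto_const_nhds.mul ((hv.sub tendsto_const_nhds).norm))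
    have h2 : Filter.Tendsto (fun n : ℕ => (s - g p) + (1/2) ^ n) Filter.atTop
        (nhds (s - g p)) := by
      have : Filter.Tendsto (fun n : ℕ => ((1:ℝ)/2) ^ n) Filter.atTop (nhds 0) := by
        apply tendsto_pow_atTop_nhds_zero_of_lt_one <;> norm_num
      simpa using (tendsto_const_nhds (x := s - g p)).add this
    have := le_of_tendsto_of_tendsto' h1 h2 key
    rw [hgv]
    exact this
  obtain ⟨m, hm⟩ := exists_maximal_of_chains_bounded hchain (fun {a b c} => rtrans)
  refine ⟨(m : X), m.2, ?_⟩
  intro b hb hble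
  have h1 : r m ⟨b, hb⟩ := hble
  have h2 : r ⟨b, hb⟩ m := hm _ h1
  have h3 : η * ‖b - (m : X)‖ ≤ g b - g m := h1
  have h4 : η * ‖(m : X) - b‖ ≤ g m - g b := h2
  rw [norm_sub_rev] at h4
  have : ‖b - (m : X)‖ = 0 := by nlinarith [norm_nonneg (b - (m : X))]
  exact sub_eq_zero.mp (norm_eq_zero.mp this)

/-- Quantitative Phelps estimate: if `F` is a nonzero functional that is nonnegative on the
cone `{x | η‖x‖ < g x}`, then the normalization of `F` is `12η`-close to `g`. -/
theorem phelps_cone_estimate {X : Type*} [NormedAddCommGroup X] [NormedSpace ℝ X]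
    (g F : StrongDual ℝ X) (hg : ‖g‖ = 1) {η : ℝ} (hη : 0 < η) (hη4 : η ≤ 1/4)
    (hFpos : ∀ x : X, η * ‖x‖ < g x → 0 ≤ F x) (hFne : F ≠ 0) :
    ‖‖F‖⁻¹ • F - g‖ ≤ 12 * η := by
  have hN : (0:ℝ) < ‖F‖ := norm_pos_iff.mpr hFne
  set N := ‖F‖ with hNdef
  -- a point where g is nearly 1
  obtain ⟨z₁, hz₁norm, hz₁⟩ : ∃ z : X, ‖z‖ < 1 ∧ 1 - η < ‖g z‖ := by
    apply ContinuousLinearMap.exists_lt_apply_of_lt_opNorm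
    rw [hg]; linarith
  obtain ⟨z₀, hz₀norm, hz₀⟩ : ∃ z : X, ‖z‖ ≤ 1 ∧ 1 - η < g z := by
    rcases le_or_gt 0 (g z₁) with hsgn | hsgn
    · exact ⟨z₁, hz₁norm.le, by rwa [Real.norm_eq_abs, abs_of_nonneg hsgn] at hz₁⟩
    · refine ⟨-z₁, by simpa using hz₁norm.le, ?_⟩
      rw [map_neg]
      rwa [Real.norm_eq_abs, abs_of_neg hsgn] at hz₁
  have hgz₀pos : (3:ℝ)/4 < g z₀ := by linarith
  have hz₀U : η * ‖z₀‖ < g z₀ := by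
    have : η * ‖z₀‖ ≤ η := by nlinarith [norm_nonneg z₀]
    linarith
  have hFz₀ : 0 ≤ F z₀ := hFpos z₀ hz₀U
  have hFz₀le : F z₀ ≤ N := by
    calc F z₀ ≤ ‖F z₀‖ := le_abs_self _
    _ ≤ ‖F‖ * ‖z₀‖ := F.le_opNorm z₀
    _ ≤ N := by nlinarith
  set t : ℝ := (1 - 2*η)/(3*η) with ht
  have htpos : 0 < t := by
    apply div_pos <;> linarith
  -- bound on almost-kernel
  have hker : ∀ w : X, g w = 0 → ‖w‖ ≤ 3 → |F w| ≤ 6 * η * N := by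
    intro w hgw hwnorm
    have hmem : ∀ σ : ℝ, σ = 1 ∨ σ = -1 → η * ‖z₀ + (σ * t) • w‖ < g (z₀ + (σ * t) • w) := by
      intro σ hσ
      have hval : g (z₀ + (σ * t) • w) = g z₀ := by
        rw [map_add, map_smul, hgw, smul_zero, add_zero]
      have habs : |σ| = 1 := by rcases hσ with rfl | rfl <;> norm_num
      have hnorm : ‖z₀ + (σ * t) • w‖ ≤ 1 + 3 * t := by
        calc ‖z₀ + (σ * t) • w‖ ≤ ‖z₀‖ + ‖(σ * t) • w‖ := norm_add_le _ _
        _ = ‖z₀‖ + |σ * t| * ‖w‖ := by rw [norm_smul, Real.norm_eq_abs]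
        _ = ‖z₀‖ + t * ‖w‖ := by rw [abs_mul, habs, one_mul, abs_of_pos htpos]
        _ ≤ 1 + 3 * t := by nlinarith
      have hcomp : η * (1 + 3 * t) = 1 - η := by
        field_simp [ht]
        rw [ht]; field_simp; ring
      rw [hval]
      calc η * ‖z₀ + (σ * t) • w‖ ≤ η * (1 + 3 * t) := by nlinarith
      _ = 1 - η := hcomp
      _ < g z₀ := hz₀
    have h1 : 0 ≤ F (z₀ + (1 * t) • w) := hFpos _ (hmem 1 (Or.inl rfl))
    have h2 : 0 ≤ F (z₀ + ((-1) * t) • w) := hFpos _ (hmem (-1) (Or.inr rfl))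
    rw [map_add, map_smul, smul_eq_mul] at h1 h2
    have hbound : |F w| ≤ F z₀ / t := by
      have hdiv : F z₀ / t * t = F z₀ := div_mul_cancel₀ _ htpos.ne'
      rw [abs_le]
      constructor
      · nlinarith
      · nlinarith
    have htlarge : 1 ≤ 6 * η * t := by
      have heq : 6 * η * t = 2 * (1 - 2*η) := by
        rw [ht]; field_simp; ring
      rw [heq]; linarith
    calc |F w| ≤ F z₀ / t := hbound
    _ ≤ N / t := by gcongr
    _ ≤ 6 * η * N := by
        rw [div_le_iff₀ htpos]
        nlinarith
  -- decomposition bound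
  set lam : ℝ := F z₀ / g z₀ with hlam
  have hlampos : 0 ≤ lam := div_nonneg hFz₀ (by linarith)
  have hmain : ∀ x : X, ‖x‖ ≤ 1 → |F x - lam * g x| ≤ 6 * η * N := by
    intro x hx
    set w : X := x - (g x / g z₀) • z₀ with hw
    have hgw : g w = 0 := by
      rw [hw, map_sub, map_smul, smul_eq_mul]
      field_simp; ring
    have hgxabs : |g x| ≤ 1 := by
      have h := g.le_opNorm x
      rw [hg, one_mul] at h
      calc |g x| = ‖g x‖ := (Real.norm_eq_abs _).symm
      _ ≤ ‖x‖ := h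
      _ ≤ 1 := hx
    have hwnorm : ‖w‖ ≤ 3 := by
      have h1 : ‖(g x / g z₀) • z₀‖ ≤ |g x| / g z₀ := by
        rw [norm_smul, Real.norm_eq_abs, abs_div, abs_of_pos (by linarith : (0:ℝ) < g z₀)]
        have : |g x| / g z₀ * ‖z₀‖ ≤ |g x| / g z₀ * 1 := by
          apply mul_le_mul_of_nonneg_left hz₀norm
          positivity
        linarith
      have h2 : |g x| / g z₀ ≤ 4/3 := by
        rw [div_le_iff₀ (by linarith : (0:ℝ) < g z₀)]
        nlinarith [abs_nonneg (g x)]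
      calc ‖w‖ ≤ ‖x‖ + ‖(g x / g z₀) • z₀‖ := norm_sub_le _ _
      _ ≤ 1 + 4/3 := by linarith
      _ ≤ 3 := by norm_num
    have hFw := hker w hgw hwnorm
    have hFwval : F w = F x - lam * g x := by
      rw [hw, map_sub, map_smul, smul_eq_mul, hlam]
      field_simp
    rwa [hFwval] at hFw
  have hopnorm : ‖F - lam • g‖ ≤ 6 * η * N := by
    apply ContinuousLinearMap.opNorm_le_of_unit_norm
    · positivity
    · intro x hx
      have := hmain x hx.le
      simpa [ContinuousLinearMap.sub_apply, ContinuousLinearMap.smul_apply,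
        Real.norm_eq_abs] using this
  have hlamN : |lam - N| ≤ 6 * η * N := by
    have h1 : ‖lam • g‖ = lam := by
      rw [norm_smul, Real.norm_eq_abs, abs_of_nonneg hlampos, hg, mul_one]
    have h2 := abs_norm_sub_norm_le (lam • g) F
    rw [h1, norm_sub_rev] at h2
    calc |lam - N| = |lam - ‖F‖| := by rw [hNdef]
    _ ≤ ‖F - lam • g‖ := h2
    _ ≤ 6 * η * N := hopnorm
  -- final bound
  have hsplit : ‖F‖⁻¹ • F - g = ‖F‖⁻¹ • (F - lam • g) + (‖F‖⁻¹ * lam - 1) • g := by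
    simp only [smul_sub, smul_smul, sub_smul, one_smul]
    module
  calc ‖‖F‖⁻¹ • F - g‖ ≤ ‖‖F‖⁻¹ • (F - lam • g)‖ + ‖(‖F‖⁻¹ * lam - 1) • g‖ := by
        rw [hsplit]; exact norm_add_le _ _
  _ = ‖F‖⁻¹ * ‖F - lam • g‖ + |‖F‖⁻¹ * lam - 1| := by
      rw [norm_smul, norm_smul, Real.norm_eq_abs, Real.norm_eq_abs, hg, mul_one,
        abs_of_pos (inv_pos.mpr hN)]
  _ ≤ ‖F‖⁻¹ * (6 * η * N) + |‖F‖⁻¹ * lam - 1| := by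
      have := mul_le_mul_of_nonneg_left hopnorm (le_of_lt (inv_pos.mpr hN))
      linarith
  _ ≤ 6 * η + 6 * η := by
      have hNinv : ‖F‖⁻¹ * N = 1 := by rw [hNdef]; field_simp
      have h1 : ‖F‖⁻¹ * (6 * η * N) = 6 * η := by
        rw [mul_comm (6*η) N, ← mul_assoc, hNinv, one_mul]
      have h2 : |‖F‖⁻¹ * lam - 1| ≤ 6 * η := by
        have : ‖F‖⁻¹ * lam - 1 = ‖F‖⁻¹ * (lam - N) := by
          rw [mul_sub, hNinv]
        rw [this, abs_mul, abs_of_pos (inv_pos.mpr hN)]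
        calc ‖F‖⁻¹ * |lam - N| ≤ ‖F‖⁻¹ * (6 * η * N) := by
              apply mul_le_mul_of_nonneg_left hlamN (le_of_lt (inv_pos.mpr hN))
        _ = 6 * η := h1
      linarith
  _ = 12 * η := by ring
lemma exists_near_one {X : Type*} [NormedAddCommGroup X] [NormedSpace ℝ X]
    (g : StrongDual ℝ X) (hg : ‖g‖ = 1) {η : ℝ} (hη : 0 < η) :
    ∃ z : X, ‖z‖ ≤ 1 ∧ 1 - η < g z := by
  obtain ⟨z₁, hz₁norm, hz₁⟩ : ∃ z : X, ‖z‖ < 1 ∧ 1 - η < ‖g z‖ := by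
    apply ContinuousLinearMap.exists_lt_apply_of_lt_opNorm
    rw [hg]; linarith
  rcases le_or_gt 0 (g z₁) with hsgn | hsgn
  · exact ⟨z₁, hz₁norm.le, by rwa [Real.norm_eq_abs, abs_of_nonneg hsgn] at hz₁⟩
  · refine ⟨-z₁, by simpa using hz₁norm.le, ?_⟩
    rw [map_neg]
    rwa [Real.norm_eq_abs, abs_of_neg hsgn] at hz₁

/-- The **Bishop–Phelps theorem**: norm-attaining functionals are dense in the unit
sphere of the dual of a real Banach space. -/
theorem bishop_phelps {X : Type*} [NormedAddCommGroup X] [NormedSpace ℝ X] [CompleteSpace X]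
    (g : StrongDual ℝ X) (hg : ‖g‖ = 1) {θ : ℝ} (hθ : 0 < θ) :
    ∃ f : StrongDual ℝ X, ‖f‖ = 1 ∧ (∃ v : X, ‖v‖ = 1 ∧ f v = 1) ∧ ‖f - g‖ < θ := by
  set η : ℝ := min (θ/13) (1/4) with hηdef
  have hη : 0 < η := lt_min (by positivity) (by norm_num)
  have hη4 : η ≤ 1/4 := min_le_right _ _
  have h12 : 12 * η < θ := by
    rcases le_total (θ/13) (1/4) with hc | hc
    · rw [hηdef, min_eq_left hc]; linarith
    · rw [hηdef, min_eq_right hc]; linarith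
  obtain ⟨v, hv1, hvmax⟩ := phelps_maximal g hg hη
  set U : Set X := {x : X | η * ‖x‖ < g x} with hUdef
  have hUopen : IsOpen U := isOpen_lt (continuous_const.mul continuous_norm) g.continuous
  have hUconv : Convex ℝ U := by
    intro a ha b hb ta tb hta htb htab
    simp only [hUdef, Set.mem_setOf_eq] at ha hb ⊢
    have hna : ‖ta • a + tb • b‖ ≤ ta * ‖a‖ + tb * ‖b‖ := by
      calc ‖ta • a + tb • b‖ ≤ ‖ta • a‖ + ‖tb • b‖ := norm_add_le _ _
      _ = ta * ‖a‖ + tb * ‖b‖ := by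
          rw [norm_smul, norm_smul, Real.norm_eq_abs, Real.norm_eq_abs,
            abs_of_nonneg hta, abs_of_nonneg htb]
    have hga : g (ta • a + tb • b) = ta * g a + tb * g b := by
      rw [map_add, map_smul, map_smul, smul_eq_mul, smul_eq_mul]
    rw [hga]
    rcases eq_or_lt_of_le hta with heq | hpos
    · have hta0 : ta = 0 := heq.symm
      have htb1 : tb = 1 := by linarith
      rw [hta0, htb1] at *
      simpa using hb
    · have h1 : ta * (η * ‖a‖) < ta * g a := mul_lt_mul_of_pos_left ha hpos
      have h2 : tb * (η * ‖b‖) ≤ tb * g b := mul_le_mul_of_nonneg_left hb.le htb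
      nlinarith [mul_le_mul_of_nonneg_left hna hη.le]
  set S : Set X := (fun x => x - v) ⁻¹' U with hSdef
  have hSopen : IsOpen S := hUopen.preimage (continuous_id.sub continuous_const)
  have hSconv : Convex ℝ S := by
    intro a ha b hb ta tb hta htb htab
    simp only [hSdef, Set.mem_preimage] at ha hb ⊢
    have key : ta • a + tb • b - v = ta • (a - v) + tb • (b - v) := by
      have hv' : (ta + tb) • v = v := by rw [htab, one_smul]
      calc ta • a + tb • b - v = ta • a + tb • b - (ta + tb) • v := by rw [hv']
      _ = ta • (a - v) + tb • (b - v) := by rw [add_smul, smul_sub, smul_sub]; abel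
    rw [key]
    exact hUconv ha hb hta htb htab
  have disj : Disjoint S (Metric.closedBall (0:X) 1) := by
    rw [Set.disjoint_left]
    intro b hbS hbB
    rw [Metric.mem_closedBall, dist_zero_right] at hbB
    simp only [hSdef, Set.mem_preimage, hUdef, Set.mem_setOf_eq, map_sub] at hbS
    have hbv : b = v := hvmax b hbB (le_of_lt hbS)
    rw [hbv] at hbS
    simp at hbS
  obtain ⟨f, u, hfu, hub⟩ :=
    geometric_hahn_banach_open hSconv hSopen (convex_closedBall (0:X) 1) disj
  obtain ⟨z₀, hz₀norm, hz₀⟩ := exists_near_one g hg hη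
  have hz₀U : η * ‖z₀‖ < g z₀ := by
    have h1 : η * ‖z₀‖ ≤ η := by nlinarith [norm_nonneg z₀]
    linarith
  have hS_t : ∀ t : ℝ, 0 < t → f v + t * f z₀ < u := by
    intro t ht
    have hmemU : t • z₀ ∈ U := by
      simp only [hUdef, Set.mem_setOf_eq, map_smul, smul_eq_mul, norm_smul,
        Real.norm_eq_abs, abs_of_pos ht]
      nlinarith [mul_lt_mul_of_pos_left hz₀U ht]
    have hmemS : v + t • z₀ ∈ S := by
      simp only [hSdef, Set.mem_preimage, add_sub_cancel_left]
      exact hmemU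
    have := hfu _ hmemS
    simpa [map_add, map_smul, smul_eq_mul] using this
  have hfvu : f v = u := by
    have hge : u ≤ f v := hub v (by simpa [Metric.mem_closedBall, dist_zero_right] using hv1)
    have hle : f v ≤ u := by
      by_contra hcon
      push_neg at hcon
      set c : ℝ := f v - u with hc
      have hcpos : 0 < c := by simp only [hc]; linarith
      set t : ℝ := c / (2 * (|f z₀| + 1)) with htdef
      have htpos : 0 < t := by positivity
      have h1 := hS_t t htpos
      have h2 : t * (|f z₀| + 1) = c / 2 := by
        rw [htdef]; field_simp
      nlinarith [neg_abs_le (f z₀), abs_nonneg (f z₀),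
        mul_le_mul_of_nonneg_left (neg_abs_le (f z₀)) htpos.le]
    linarith
  have hfz₀neg : f z₀ < 0 := by
    have := hS_t 1 one_pos
    rw [one_mul] at this
    linarith [hfvu]
  set F : StrongDual ℝ X := -f with hFdef
  have hFpos : ∀ x : X, η * ‖x‖ < g x → 0 ≤ F x := by
    intro x hx
    have hmemS : v + x ∈ S := by
      simp only [hSdef, Set.mem_preimage, add_sub_cancel_left, hUdef, Set.mem_setOf_eq]
      exact hx
    have := hfu _ hmemS
    rw [map_add, hfvu] at this
    simp only [hFdef, ContinuousLinearMap.neg_apply]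
    linarith
  have hFne : F ≠ 0 := by
    intro hzero
    have : F z₀ = 0 := by rw [hzero]; rfl
    simp only [hFdef, ContinuousLinearMap.neg_apply] at this
    linarith
  have hfb : ∀ b : X, ‖b‖ ≤ 1 → u ≤ f b ∧ f b ≤ -u := by
    intro b hb
    constructor
    · exact hub b (by simpa [Metric.mem_closedBall, dist_zero_right] using hb)
    · have := hub (-b) (by simpa [Metric.mem_closedBall, dist_zero_right] using hb)
      rw [map_neg] at this
      linarith
  have hupos : 0 < -u := by
    have h1 : F z₀ ≤ -u := by
      have := (hfb z₀ hz₀norm).1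
      simp only [hFdef, ContinuousLinearMap.neg_apply]
      linarith
    have h2 : 0 < F z₀ := by
      simp only [hFdef, ContinuousLinearMap.neg_apply]
      linarith
    linarith
  have hFv : F v = -u := by
    simp only [hFdef, ContinuousLinearMap.neg_apply]
    rw [hfvu]
  have hFnorm : ‖F‖ = -u := by
    apply le_antisymm
    · apply ContinuousLinearMap.opNorm_le_of_unit_norm hupos.le
      intro x hx
      rw [Real.norm_eq_abs, abs_le]
      obtain ⟨ha, hb⟩ := hfb x hx.le
      constructor
      · simp only [hFdef, ContinuousLinearMap.neg_apply]; linarith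
      · simp only [hFdef, ContinuousLinearMap.neg_apply]; linarith
    · calc -u = F v := hFv.symm
      _ ≤ ‖F v‖ := le_abs_self _
      _ ≤ ‖F‖ * ‖v‖ := F.le_opNorm v
      _ ≤ ‖F‖ := by nlinarith [norm_nonneg F]
  have hvnorm1 : ‖v‖ = 1 := by
    apply le_antisymm hv1
    have h1 : -u ≤ ‖F‖ * ‖v‖ := by
      calc -u = F v := hFv.symm
      _ ≤ ‖F v‖ := le_abs_self _
      _ ≤ ‖F‖ * ‖v‖ := F.le_opNorm v
    rw [hFnorm] at h1
    nlinarith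
  refine ⟨‖F‖⁻¹ • F, ?_, ⟨v, hvnorm1, ?_⟩, ?_⟩
  · rw [norm_smul, Real.norm_eq_abs, abs_of_pos (inv_pos.mpr (by rw [hFnorm]; exact hupos))]
    rw [inv_mul_cancel₀ (by rw [hFnorm]; exact hupos.ne')]
  · rw [ContinuousLinearMap.smul_apply, smul_eq_mul, hFv, hFnorm]
    field_simp
    exact div_self (by linarith)
  · calc ‖‖F‖⁻¹ • F - g‖ ≤ 12 * η :=
        phelps_cone_estimate g F hg hη hη4 hFpos hFne
    _ < θ := h12

/-- From slices determined by arbitrary norm-one functionals one can pass to slices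
determined by norm-attaining functionals. -/
theorem stmt_16 {X : Type*} [NormedAddCommGroup X] [NormedSpace ℝ X] [CompleteSpace X]
    (h : ∀ ε : ℝ, 0 < ε → ∃ δ : ℝ, 0 < δ ∧
      ∀ x : X, ‖x‖ = 1 → ∃ g : StrongDual ℝ X, ‖g‖ = 1 ∧
        {y : X | ‖y‖ ≤ 1 ∧ 1 - 2 * δ < g y} ⊆ Metric.ball x ε) :
    ∀ ε : ℝ, 0 < ε → ∃ δ : ℝ, 0 < δ ∧
      ∀ x : X, ‖x‖ = 1 → ∃ f : StrongDual ℝ X, ‖f‖ = 1 ∧ (∃ y : X, ‖y‖ = 1 ∧ f y = 1) ∧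
        {y : X | ‖y‖ ≤ 1 ∧ 1 - δ < f y} ⊆ Metric.ball x ε ∧
        {y : X | ‖y‖ = 1 ∧ ∃ g : StrongDual ℝ X, ‖g‖ = 1 ∧ g y = 1 ∧ ‖g - f‖ < δ} ⊆
          Metric.ball x ε := by
  intro ε hε
  obtain ⟨δ₁, hδ₁, H⟩ := h (ε/2) (by linarith)
  refine ⟨δ₁/2, by linarith, ?_⟩
  intro x hx
  obtain ⟨g, hg, hslice⟩ := H x hx
  obtain ⟨f, hf, hatt, hfg⟩ := bishop_phelps g hg (show (0:ℝ) < δ₁/2 by linarith)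
  have hsub : {y : X | ‖y‖ ≤ 1 ∧ 1 - δ₁/2 < f y} ⊆ Metric.ball x ε := by
    intro y hy
    obtain ⟨hy1, hy2⟩ := hy
    have hgy : 1 - 2 * δ₁ < g y := by
      have h1 : f y - g y ≤ ‖f - g‖ * ‖y‖ := by
        calc f y - g y = (f - g) y := by simp
        _ ≤ ‖(f - g) y‖ := le_abs_self _
        _ ≤ ‖f - g‖ * ‖y‖ := (f - g).le_opNorm y
      have h2 : ‖f - g‖ * ‖y‖ ≤ δ₁/2 := by
        nlinarith [norm_nonneg (f - g), norm_nonneg y]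
      linarith
    have := hslice ⟨hy1, hgy⟩
    rw [Metric.mem_ball] at this ⊢
    linarith
  refine ⟨f, hf, hatt, hsub, ?_⟩
  intro y hy
  obtain ⟨hy1, g', hg'1, hg'2, hg'3⟩ := hy
  apply hsub
  refine ⟨hy1.le, ?_⟩
  have h1 : g' y - f y ≤ ‖g' - f‖ * ‖y‖ := by
    calc g' y - f y = (g' - f) y := by simp
    _ ≤ ‖(g' - f) y‖ := le_abs_self _
    _ ≤ ‖g' - f‖ * ‖y‖ := (g' - f).le_opNorm y
  rw [hy1, mul_one] at h1
  rw [hg'2] at h1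
  linarith
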